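/- Let F ⊆ ([n] choose k) be intersecting with τ(F) ≥ 3 and let U ⊆ [n] satisfy |F ∩ U| ≥ 2 for all F ∈ F. Then for any disjoint 2-element subsets P, P' of U and n ≥ 2k + |U| − 4, f_P + f_{P'} ≤ C(n−|U|, k−2) − C(n−k−|U|+2, k−2) + 1, where f_S counts the members F ∈ F with F ∩ U = S. -/

import Mathlib

open Finset

namespace FPBound

/-- Elementary compression of a set: replace `j` by `i` (if `j ∈ A`, `i ∉ A`). -/
def cmp (i j : ℕ) (A : Finset ℕ) : Finset ℕ :=
  if j ∈ A ∧ i ∉ A then insert i (A.erase j) else A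

lemma cmp_of_mem {i j : ℕ} {A : Finset ℕ} (hj : j ∈ A) (hi : i ∉ A) :
    cmp i j A = insert i (A.erase j) := if_pos ⟨hj, hi⟩

lemma cmp_card (i j : ℕ) (A : Finset ℕ) : (cmp i j A).card = A.card := by
  unfold cmp
  split_ifs with h
  · rcases h with ⟨hj, hi⟩
    rw [card_insert_of_notMem (fun hmem => hi (mem_of_mem_erase hmem)),
      card_erase_of_mem hj]
    have : 1 ≤ A.card := card_pos.2 ⟨j, hj⟩
    omega
  · rfl

lemma cmp_subset {V A : Finset ℕ} (hA : A ⊆ V) {i j : ℕ} (hi : i ∈ V) :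
    cmp i j A ⊆ V := by
  unfold cmp
  split_ifs with h
  · intro x hx
    rcases mem_insert.1 hx with rfl | hx
    · exact hi
    · exact hA (mem_of_mem_erase hx)
  · exact hA

lemma cmp_recover {i j : ℕ} {A : Finset ℕ} (hj : j ∈ A) (hi : i ∉ A) :
    insert j ((insert i (A.erase j)).erase i) = A := by
  have hne : i ∉ A.erase j := fun h => hi (mem_of_mem_erase h)
  rw [erase_insert hne, insert_erase hj]

def w (A : Finset ℕ) : ℕ := ∑ x ∈ A, x

def meas (𝒜 : Finset (Finset ℕ)) : ℕ := ∑ A ∈ 𝒜, w A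

lemma w_cmp {i j : ℕ} {A : Finset ℕ} (hj : j ∈ A) (hi : i ∉ A) :
    w (cmp i j A) + j = w A + i := by
  rw [cmp_of_mem hj hi]
  unfold w
  rw [sum_insert (fun h => hi (mem_of_mem_erase h))]
  have h2 : (∑ x ∈ A.erase j, x) + j = ∑ x ∈ A, x := by
    simpa using Finset.sum_erase_add A (fun x => x) hj
  omega

/-- The family compression. -/
def shift (i j : ℕ) (𝒜 : Finset (Finset ℕ)) : Finset (Finset ℕ) :=
  𝒜.filter (fun A => cmp i j A ∈ 𝒜) ∪ (𝒜.filter (fun A => cmp i j A ∉ 𝒜)).image (cmp i j)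

lemma mover_cond {i j : ℕ} {𝒜 : Finset (Finset ℕ)} {A : Finset ℕ} (hA : A ∈ 𝒜)
    (h : cmp i j A ∉ 𝒜) : j ∈ A ∧ i ∉ A := by
  by_contra hc
  rw [cmp, if_neg hc] at h
  exact h hA

lemma cmp_injOn_movers {i j : ℕ} {𝒜 : Finset (Finset ℕ)} :
    Set.InjOn (cmp i j) ↑(𝒜.filter (fun A => cmp i j A ∉ 𝒜)) := by
  intro A hA B hB hAB
  simp only [coe_filter, Set.mem_setOf_eq] at hA hB
  obtain ⟨hjA, hiA⟩ := mover_cond hA.1 hA.2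
  obtain ⟨hjB, hiB⟩ := mover_cond hB.1 hB.2
  rw [cmp_of_mem hjA hiA, cmp_of_mem hjB hiB] at hAB
  calc A = insert j ((insert i (A.erase j)).erase i) := (cmp_recover hjA hiA).symm
  _ = insert j ((insert i (B.erase j)).erase i) := by rw [hAB]
  _ = B := cmp_recover hjB hiB

lemma shift_disj {i j : ℕ} {𝒜 : Finset (Finset ℕ)} :
    Disjoint (𝒜.filter (fun A => cmp i j A ∈ 𝒜))
      ((𝒜.filter (fun A => cmp i j A ∉ 𝒜)).image (cmp i j)) := by
  rw [disjoint_left]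
  intro C hC hC'
  obtain ⟨A, hA, rfl⟩ := mem_image.1 hC'
  exact (mem_filter.1 hA).2 (mem_filter.1 hC).1

lemma shift_card (i j : ℕ) (𝒜 : Finset (Finset ℕ)) : (shift i j 𝒜).card = 𝒜.card := by
  rw [shift, card_union_of_disjoint shift_disj, card_image_of_injOn cmp_injOn_movers,
    card_filter_add_card_filter_not]

lemma meas_shift_le (i j : ℕ) (hij : i < j) (𝒜 : Finset (Finset ℕ)) :
    meas (shift i j 𝒜) ≤ meas 𝒜 := by
  rw [shift, meas, sum_union shift_disj, sum_image cmp_injOn_movers]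
  have h1 : ∑ A ∈ 𝒜.filter (fun A => cmp i j A ∉ 𝒜), w (cmp i j A)
      ≤ ∑ A ∈ 𝒜.filter (fun A => cmp i j A ∉ 𝒜), w A := by
    apply sum_le_sum
    intro A hA
    rw [mem_filter] at hA
    obtain ⟨hj, hi⟩ := mover_cond hA.1 hA.2
    have := w_cmp hj hi (A := A)
    omega
  calc _ ≤ (∑ A ∈ 𝒜.filter (fun A => cmp i j A ∈ 𝒜), w A)
        + ∑ A ∈ 𝒜.filter (fun A => cmp i j A ∉ 𝒜), w A := by omega
  _ = meas 𝒜 := by rw [meas, sum_filter_add_sum_filter_not]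

lemma meas_shift_lt {i j : ℕ} (hij : i < j) {𝒜 : Finset (Finset ℕ)} {A : Finset ℕ}
    (hA : A ∈ 𝒜) (hmove : cmp i j A ∉ 𝒜) :
    meas (shift i j 𝒜) < meas 𝒜 := by
  rw [shift, meas, sum_union shift_disj, sum_image cmp_injOn_movers]
  have hne : (𝒜.filter (fun A => cmp i j A ∉ 𝒜)).Nonempty := ⟨A, mem_filter.2 ⟨hA, hmove⟩⟩
  have h1 : ∑ A ∈ 𝒜.filter (fun A => cmp i j A ∉ 𝒜), w (cmp i j A)
      < ∑ A ∈ 𝒜.filter (fun A => cmp i j A ∉ 𝒜), w A := by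
    apply sum_lt_sum_of_nonempty hne
    intro A hA
    rw [mem_filter] at hA
    obtain ⟨hj, hi⟩ := mover_cond hA.1 hA.2
    have := w_cmp hj hi (A := A)
    omega
  have h2 : (∑ A ∈ 𝒜.filter (fun A => cmp i j A ∈ 𝒜), w A)
        + ∑ A ∈ 𝒜.filter (fun A => cmp i j A ∉ 𝒜), w A = meas 𝒜 := by
    rw [meas, sum_filter_add_sum_filter_not]
  omega


-- cases for membership in shift
lemma mem_shift_cases {i j : ℕ} {𝒜 : Finset (Finset ℕ)} {C : Finset ℕ}
    (hC : C ∈ shift i j 𝒜) :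
    (C ∈ 𝒜 ∧ cmp i j C ∈ 𝒜) ∨
      (∃ A ∈ 𝒜, j ∈ A ∧ i ∉ A ∧ cmp i j A ∉ 𝒜 ∧ C = insert i (A.erase j)) := by
  rcases mem_union.1 hC with h | h
  · exact Or.inl ⟨(mem_filter.1 h).1, (mem_filter.1 h).2⟩
  · obtain ⟨A, hA, rfl⟩ := mem_image.1 h
    rw [mem_filter] at hA
    obtain ⟨hj, hi⟩ := mover_cond hA.1 hA.2
    exact Or.inr ⟨A, hA.1, hj, hi, hA.2, cmp_of_mem hj hi⟩

lemma shift_unif {i j : ℕ} {V : Finset ℕ} {k : ℕ} {𝒜 : Finset (Finset ℕ)}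
    (hi : i ∈ V) (hA : ∀ A ∈ 𝒜, A ⊆ V ∧ A.card = k) :
    ∀ C ∈ shift i j 𝒜, C ⊆ V ∧ C.card = k := by
  intro C hC
  rcases mem_shift_cases hC with ⟨h, _⟩ | ⟨A, hAm, hj, hin, _, rfl⟩
  · exact hA C h
  · obtain ⟨hsub, hcard⟩ := hA A hAm
    constructor
    · intro x hx
      rcases mem_insert.1 hx with rfl | hx
      · exact hi
      · exact hsub (mem_of_mem_erase hx)
    · rw [card_insert_of_notMem (fun h => hin (mem_of_mem_erase h)), card_erase_of_mem hj]
      have : 1 ≤ A.card := card_pos.2 ⟨j, hj⟩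
      omega

/-- one-sided helper for cross-intersecting preservation: `A` is a mover of `𝒜`,
`B'` is a kept member of `ℬ` (i.e. `B' ∈ ℬ` and `cmp i j B' ∈ ℬ`). -/
lemma cross_aux {i j : ℕ} {𝒜 ℬ : Finset (Finset ℕ)}
    (hx : ∀ A ∈ 𝒜, ∀ B ∈ ℬ, (A ∩ B).Nonempty)
    {A B' : Finset ℕ} (hAm : A ∈ 𝒜) (hj : j ∈ A) (hi : i ∉ A)
    (hB' : B' ∈ ℬ) (hB'keep : cmp i j B' ∈ ℬ) :
    ((insert i (A.erase j)) ∩ B').Nonempty := by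
  by_cases hiB : i ∈ B'
  · exact ⟨i, mem_inter.2 ⟨mem_insert_self _ _, hiB⟩⟩
  · obtain ⟨x, hxm⟩ := hx A hAm B' hB'
    rw [mem_inter] at hxm
    by_cases hxj : x = j
    · -- x = j ∈ B', so B' is compressible; use cross with cmp i j B'
      subst hxj
      rw [cmp_of_mem hxm.2 hiB] at hB'keep
      obtain ⟨y, hym⟩ := hx A hAm _ hB'keep
      rw [mem_inter] at hym
      have hyi : y ≠ i := fun h => hi (h ▸ hym.1)
      have hyB : y ∈ B'.erase x := by
        rcases mem_insert.1 hym.2 with h | h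
        · exact absurd h hyi
        · exact h
      refine ⟨y, mem_inter.2 ⟨?_, mem_of_mem_erase hyB⟩⟩
      exact mem_insert_of_mem (mem_erase.2 ⟨(mem_erase.1 hyB).1, hym.1⟩)
    · exact ⟨x, mem_inter.2 ⟨mem_insert_of_mem (mem_erase.2 ⟨hxj, hxm.1⟩), hxm.2⟩⟩

lemma shift_cross {i j : ℕ} {𝒜 ℬ : Finset (Finset ℕ)}
    (hx : ∀ A ∈ 𝒜, ∀ B ∈ ℬ, (A ∩ B).Nonempty) :
    ∀ A' ∈ shift i j 𝒜, ∀ B' ∈ shift i j ℬ, (A' ∩ B').Nonempty := by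
  have hx' : ∀ B ∈ ℬ, ∀ A ∈ 𝒜, (B ∩ A).Nonempty := by
    intro B hB A hA
    rw [inter_comm]; exact hx A hA B hB
  intro A' hA' B' hB'
  rcases mem_shift_cases hA' with ⟨hA1, hA2⟩ | ⟨A, hAm, hjA, hiA, hAmv, rfl⟩ <;>
    rcases mem_shift_cases hB' with ⟨hB1, hB2⟩ | ⟨B, hBm, hjB, hiB, hBmv, rfl⟩
  · exact hx _ hA1 _ hB1
  · rw [inter_comm]; exact cross_aux hx' hBm hjB hiB hA1 hA2
  · exact cross_aux hx hAm hjA hiA hB1 hB2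
  · -- both movers
    obtain ⟨x, hxm⟩ := hx A hAm B hBm
    rw [mem_inter] at hxm
    by_cases hxj : x = j
    · exact ⟨i, mem_inter.2 ⟨mem_insert_self _ _, mem_insert_self _ _⟩⟩
    · exact ⟨x, mem_inter.2 ⟨mem_insert_of_mem (mem_erase.2 ⟨hxj, hxm.1⟩),
        mem_insert_of_mem (mem_erase.2 ⟨hxj, hxm.2⟩)⟩⟩

/-- counting bound: a uniform family on `W` all whose members meet `T ⊆ W`. -/
lemma card_meets {W T : Finset ℕ} (hTW : T ⊆ W) (s : ℕ) {𝒳 : Finset (Finset ℕ)}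
    (hu : ∀ X ∈ 𝒳, X ⊆ W ∧ X.card = s) (hm : ∀ X ∈ 𝒳, (X ∩ T).Nonempty) :
    𝒳.card + (W.card - T.card).choose s ≤ W.card.choose s := by
  have h2 : Disjoint 𝒳 (powersetCard s (W \ T)) := by
    rw [disjoint_left]
    intro X hX hX'
    obtain ⟨x, hx⟩ := hm X hX
    rw [mem_inter] at hx
    have := (mem_powersetCard.1 hX').1 hx.1
    exact (mem_sdiff.1 this).2 hx.2
  have h1 : 𝒳 ∪ powersetCard s (W \ T) ⊆ powersetCard s W := by
    intro X hX
    rcases mem_union.1 hX with h | h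
    · exact mem_powersetCard.2 ⟨(hu X h).1, (hu X h).2⟩
    · rw [mem_powersetCard] at h ⊢
      exact ⟨h.1.trans sdiff_subset, h.2⟩
  have := card_le_card h1
  rw [card_union_of_disjoint h2, card_powersetCard, card_powersetCard, card_sdiff_of_subset hTW] at this
  exact this



/-- The cross-intersecting statement at ground-set size `n`. -/
def FT (n : ℕ) : Prop :=
  ∀ (k : ℕ) (V : Finset ℕ) (𝒜 ℬ : Finset (Finset ℕ)),
    V.card = n → 2 * k ≤ n →
    (∀ A ∈ 𝒜, A ⊆ V ∧ A.card = k) → (∀ B ∈ ℬ, B ⊆ V ∧ B.card = k) →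
    (∀ A ∈ 𝒜, ∀ B ∈ ℬ, (A ∩ B).Nonempty) → 𝒜.Nonempty → ℬ.Nonempty →
    𝒜.card + ℬ.card + (n - k).choose k ≤ n.choose k + 1

lemma split_card (t : ℕ) (𝒜 : Finset (Finset ℕ)) :
    𝒜.card = (𝒜.filter (fun A => t ∉ A)).card
      + ((𝒜.filter (fun A => t ∈ A)).image (fun A => A.erase t)).card := by
  rw [card_image_of_injOn, add_comm, card_filter_add_card_filter_not]
  intro A hA B hB hAB
  simp only [coe_filter, Set.mem_setOf_eq] at hA hB
  rw [← insert_erase hA.2, show A.erase t = B.erase t from hAB, insert_erase hB.2]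

lemma mem_split_image {t : ℕ} {𝒜 : Finset (Finset ℕ)} {C : Finset ℕ}
    (h : C ∈ (𝒜.filter (fun A => t ∈ A)).image (fun A => A.erase t)) :
    ∃ A, A ∈ 𝒜 ∧ t ∈ A ∧ C = A.erase t := by
  obtain ⟨A, hA, rfl⟩ := mem_image.1 h
  rw [mem_filter] at hA
  exact ⟨A, hA.1, hA.2, rfl⟩

lemma crossFT_stable (q l : ℕ) (V : Finset ℕ) (𝒜 ℬ : Finset (Finset ℕ))
    (IH : FT q)
    (hV : V.card = q + 1) (hq : 2 * l + 4 ≤ q)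
    (hA : ∀ A ∈ 𝒜, A ⊆ V ∧ A.card = l + 2) (hB : ∀ B ∈ ℬ, B ⊆ V ∧ B.card = l + 2)
    (hcross : ∀ A ∈ 𝒜, ∀ B ∈ ℬ, (A ∩ B).Nonempty)
    (hAne : 𝒜.Nonempty) (hBne : ℬ.Nonempty)
    (hsA : ∀ i ∈ V, ∀ j, i < j → ∀ A ∈ 𝒜, cmp i j A ∈ 𝒜)
    (hsB : ∀ i ∈ V, ∀ j, i < j → ∀ B ∈ ℬ, cmp i j B ∈ ℬ) :
    𝒜.card + ℬ.card + (q + 1 - (l + 2)).choose (l + 2) ≤ (q + 1).choose (l + 2) + 1 := by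
  have hVne : V.Nonempty := card_pos.1 (by omega)
  set t := V.max' hVne with ht
  have htV : t ∈ V := V.max'_mem hVne
  set V' := V.erase t with hV'def
  have hV'card : V'.card = q := by rw [hV'def, card_erase_of_mem htV, hV]; omega
  set A0 := 𝒜.filter (fun A => t ∉ A) with hA0def
  set A1 := (𝒜.filter (fun A => t ∈ A)).image (fun A => A.erase t) with hA1def
  set B0 := ℬ.filter (fun B => t ∉ B) with hB0def
  set B1 := (ℬ.filter (fun B => t ∈ B)).image (fun B => B.erase t) with hB1def
  -- uniformity
  have hA0u : ∀ A ∈ A0, A ⊆ V' ∧ A.card = l + 2 := by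
    intro A hAm
    rw [hA0def, mem_filter] at hAm
    exact ⟨subset_erase.2 ⟨(hA A hAm.1).1, hAm.2⟩, (hA A hAm.1).2⟩
  have hB0u : ∀ B ∈ B0, B ⊆ V' ∧ B.card = l + 2 := by
    intro B hBm
    rw [hB0def, mem_filter] at hBm
    exact ⟨subset_erase.2 ⟨(hB B hBm.1).1, hBm.2⟩, (hB B hBm.1).2⟩
  have hA1u : ∀ C ∈ A1, C ⊆ V' ∧ C.card = l + 1 := by
    intro C hCm
    obtain ⟨A, hAm, htA, rfl⟩ := mem_split_image (hA1def ▸ hCm)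
    refine ⟨erase_subset_erase t (hA A hAm).1, ?_⟩
    rw [card_erase_of_mem htA, (hA A hAm).2]
    omega
  have hB1u : ∀ C ∈ B1, C ⊆ V' ∧ C.card = l + 1 := by
    intro C hCm
    obtain ⟨B, hBm, htB, rfl⟩ := mem_split_image (hB1def ▸ hCm)
    refine ⟨erase_subset_erase t (hB B hBm).1, ?_⟩
    rw [card_erase_of_mem htB, (hB B hBm).2]
    omega
  -- cross-intersection facts
  have hx00 : ∀ A ∈ A0, ∀ B ∈ B0, (A ∩ B).Nonempty := fun A hAm B hBm =>
    hcross A (filter_subset _ _ (hA0def ▸ hAm)) B (filter_subset _ _ (hB0def ▸ hBm))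
  have hx10 : ∀ C ∈ A1, ∀ B ∈ B0, (C ∩ B).Nonempty := by
    intro C hCm B hBm
    obtain ⟨A, hAm, htA, rfl⟩ := mem_split_image (hA1def ▸ hCm)
    rw [hB0def, mem_filter] at hBm
    obtain ⟨x, hx⟩ := hcross A hAm B hBm.1
    rw [mem_inter] at hx
    have hxt : x ≠ t := fun h => hBm.2 (h ▸ hx.2)
    exact ⟨x, mem_inter.2 ⟨mem_erase.2 ⟨hxt, hx.1⟩, hx.2⟩⟩
  have hx01 : ∀ A ∈ A0, ∀ C ∈ B1, (A ∩ C).Nonempty := by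
    intro A hAm C hCm
    obtain ⟨B, hBm, htB, rfl⟩ := mem_split_image (hB1def ▸ hCm)
    rw [hA0def, mem_filter] at hAm
    obtain ⟨x, hx⟩ := hcross A hAm.1 B hBm
    rw [mem_inter] at hx
    have hxt : x ≠ t := fun h => hAm.2 (h ▸ hx.1)
    exact ⟨x, mem_inter.2 ⟨hx.1, mem_erase.2 ⟨hxt, hx.2⟩⟩⟩
  have hx11 : ∀ C ∈ A1, ∀ D ∈ B1, (C ∩ D).Nonempty := by
    intro C hCm D hDm
    obtain ⟨A, hAm, htA, rfl⟩ := mem_split_image (hA1def ▸ hCm)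
    obtain ⟨B, hBm, htB, rfl⟩ := mem_split_image (hB1def ▸ hDm)
    -- find i ∈ V' outside A ∪ B
    have hcard : ((A ∪ B).erase t).card < V'.card := by
      have h1 : (A ∪ B).card ≤ (l + 2) + (l + 2) := by
        calc (A ∪ B).card ≤ A.card + B.card := card_union_le A B
        _ = (l + 2) + (l + 2) := by rw [(hA A hAm).2, (hB B hBm).2]
      have h2 := card_erase_of_mem (mem_union_left B htA)
      omega
    have hnsub : ¬ V' ⊆ (A ∪ B).erase t := fun hsub => absurd (card_le_card hsub) (by omega)
    obtain ⟨i, hiV', hinot⟩ := not_subset.1 hnsub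
    have hit' : i ≠ t := (mem_erase.1 (hV'def ▸ hiV')).1
    have hiV : i ∈ V := mem_of_mem_erase (hV'def ▸ hiV')
    have hiAB : i ∉ A ∪ B := fun h => hinot (mem_erase.2 ⟨hit', h⟩)
    have hiA : i ∉ A := fun h => hiAB (mem_union_left _ h)
    have hiB : i ∉ B := fun h => hiAB (mem_union_right _ h)
    have hit : i < t := lt_of_le_of_ne (V.le_max' i hiV) hit'
    have hA'' : insert i (A.erase t) ∈ 𝒜 := by
      have := hsA i hiV t hit A hAm
      rwa [cmp_of_mem htA hiA] at this
    obtain ⟨x, hx⟩ := hcross _ hA'' B hBm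
    rw [mem_inter] at hx
    have hxi : x ≠ i := fun h => hiB (h ▸ hx.2)
    have hxA : x ∈ A.erase t := by
      rcases mem_insert.1 hx.1 with h | h
      · exact absurd h hxi
      · exact h
    exact ⟨x, mem_inter.2 ⟨hxA, mem_erase.2 ⟨(mem_erase.1 hxA).1, hx.2⟩⟩⟩
  -- nonemptiness splits
  have hsplitA : A0.Nonempty ∨ A1.Nonempty := by
    obtain ⟨A, hAm⟩ := hAne
    by_cases htA : t ∈ A
    · exact Or.inr ⟨A.erase t, mem_image.2 ⟨A, mem_filter.2 ⟨hAm, htA⟩, rfl⟩⟩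
    · exact Or.inl ⟨A, mem_filter.2 ⟨hAm, htA⟩⟩
  have hsplitB : B0.Nonempty ∨ B1.Nonempty := by
    obtain ⟨B, hBm⟩ := hBne
    by_cases htB : t ∈ B
    · exact Or.inr ⟨B.erase t, mem_image.2 ⟨B, mem_filter.2 ⟨hBm, htB⟩, rfl⟩⟩
    · exact Or.inl ⟨B, mem_filter.2 ⟨hBm, htB⟩⟩
  -- arithmetic facts
  have hc1 : (q + 1).choose (l + 2) = q.choose (l + 1) + q.choose (l + 2) :=
    Nat.choose_succ_succ q (l + 1)
  obtain ⟨a, ha⟩ : ∃ a, q = a + (l + 2) := ⟨q - (l + 2), by omega⟩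
  have hc2 : (a + 1).choose (l + 2) = a.choose (l + 1) + a.choose (l + 2) :=
    Nat.choose_succ_succ a (l + 1)
  have hc3 : (a + 1).choose (l + 1) = a.choose l + a.choose (l + 1) :=
    Nat.choose_succ_succ a l
  have hc4 : 1 ≤ a.choose l := Nat.choose_pos (by omega)
  have hc5 : (a + 1).choose (l + 2) ≤ q.choose (l + 2) := Nat.choose_le_choose _ (by omega)
  have hc6 : a.choose (l + 1) ≤ q.choose (l + 1) := Nat.choose_le_choose _ (by omega)
  -- IH instantiations
  have IHk : A0.Nonempty → B0.Nonempty →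
      A0.card + B0.card + a.choose (l + 2) ≤ q.choose (l + 2) + 1 := by
    intro h1 h2
    have := IH (l + 2) V' A0 B0 hV'card (by omega) hA0u hB0u hx00 h1 h2
    rwa [show q - (l + 2) = a from by omega] at this
  have IHk1 : A1.Nonempty → B1.Nonempty →
      A1.card + B1.card + (a + 1).choose (l + 1) ≤ q.choose (l + 1) + 1 := by
    intro h1 h2
    have := IH (l + 1) V' A1 B1 hV'card (by omega) hA1u hB1u hx11 h1 h2
    rwa [show q - (l + 1) = a + 1 from by omega] at this
  -- crude counting bounds
  have LA1 : B0.Nonempty → A1.card + a.choose (l + 1) ≤ q.choose (l + 1) := by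
    rintro ⟨B, hBm⟩
    have := card_meets (hB0u B hBm).1 (l + 1) hA1u (fun C hC => hx10 C hC B hBm)
    rwa [hV'card, (hB0u B hBm).2, show q - (l + 2) = a from by omega] at this
  have LB1 : A0.Nonempty → B1.card + a.choose (l + 1) ≤ q.choose (l + 1) := by
    rintro ⟨A, hAm⟩
    have := card_meets (hA0u A hAm).1 (l + 1) hB1u
      (fun C hC => by rw [inter_comm]; exact hx01 A hAm C hC)
    rwa [hV'card, (hA0u A hAm).2, show q - (l + 2) = a from by omega] at this
  have LB0 : A1.Nonempty → B0.card + (a + 1).choose (l + 2) ≤ q.choose (l + 2) := by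
    rintro ⟨C, hCm⟩
    have := card_meets (hA1u C hCm).1 (l + 2) hB0u
      (fun B hBm => by rw [inter_comm]; exact hx10 C hCm B hBm)
    rwa [hV'card, (hA1u C hCm).2, show q - (l + 1) = a + 1 from by omega] at this
  have LA0 : B1.Nonempty → A0.card + (a + 1).choose (l + 2) ≤ q.choose (l + 2) := by
    rintro ⟨C, hCm⟩
    have := card_meets (hB1u C hCm).1 (l + 2) hA0u (fun A hAm => hx01 A hAm C hCm)
    rwa [hV'card, (hB1u C hCm).2, show q - (l + 1) = a + 1 from by omega] at this
  -- rewrite goal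
  have hgA : 𝒜.card = A0.card + A1.card := split_card t 𝒜
  have hgB : ℬ.card = B0.card + B1.card := split_card t ℬ
  rw [show q + 1 - (l + 2) = a + 1 from by omega, hgA, hgB]
  -- case analysis
  rcases A0.eq_empty_or_nonempty with hA0e | hA0ne
  · have hA1ne : A1.Nonempty := hsplitA.resolve_left (by rw [hA0e]; exact fun h => h.ne_empty rfl)
    have hA0z : A0.card = 0 := by rw [hA0e, card_empty]
    rcases B1.eq_empty_or_nonempty with hB1e | hB1ne
    · have hB0ne : B0.Nonempty :=
        hsplitB.resolve_right (by rw [hB1e]; exact fun h => h.ne_empty rfl)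
      have hB1z : B1.card = 0 := by rw [hB1e, card_empty]
      have l1 := LA1 hB0ne
      have l2 := LB0 hA1ne
      omega
    · have i1 := IHk1 hA1ne hB1ne
      have l2 : B0.card + (a + 1).choose (l + 2) ≤ q.choose (l + 2) := LB0 hA1ne
      omega
  · rcases B0.eq_empty_or_nonempty with hB0e | hB0ne
    · have hB1ne : B1.Nonempty :=
        hsplitB.resolve_left (by rw [hB0e]; exact fun h => h.ne_empty rfl)
      have hB0z : B0.card = 0 := by rw [hB0e, card_empty]
      rcases A1.eq_empty_or_nonempty with hA1e | hA1ne
      · have hA1z : A1.card = 0 := by rw [hA1e, card_empty]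
        have l1 := LB1 hA0ne
        have l2 := LA0 hB1ne
        omega
      · have i1 := IHk1 hA1ne hB1ne
        have l2 := LA0 hB1ne
        omega
    · have i0 := IHk hA0ne hB0ne
      rcases A1.eq_empty_or_nonempty with hA1e | hA1ne
      · have hA1z : A1.card = 0 := by rw [hA1e, card_empty]
        have l1 : B1.card + a.choose (l + 1) ≤ q.choose (l + 1) := LB1 hA0ne
        omega
      · rcases B1.eq_empty_or_nonempty with hB1e | hB1ne
        · have hB1z : B1.card = 0 := by rw [hB1e, card_empty]
          have l1 := LA1 hB0ne
          omega
        · have i1 := IHk1 hA1ne hB1ne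
          omega


theorem crossFT (n : ℕ) : FT n := by
  induction n using Nat.strong_induction_on with
  | _ n IHn =>
  intro k V 𝒜 ℬ hV hkn hA hB hcross hAne hBne
  -- dispatch k = 0
  rcases Nat.eq_zero_or_pos k with rfl | hk1
  · obtain ⟨A, hAm⟩ := hAne
    obtain ⟨B, hBm⟩ := hBne
    obtain ⟨x, hx⟩ := hcross A hAm B hBm
    have : A = ∅ := card_eq_zero.1 (hA A hAm).2
    rw [this] at hx
    simp at hx
  -- dispatch k = 1
  rcases eq_or_lt_of_le (show 1 ≤ k from hk1) with hk1' | hk2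
  · obtain ⟨B₀, hB₀⟩ := hBne
    obtain ⟨A₀, hA₀⟩ := hAne
    have hsingle : ∀ A ∈ 𝒜, ∀ B ∈ ℬ, A = B := by
      intro A hAm B hBm
      obtain ⟨x, hxA⟩ := card_eq_one.1 ((hA A hAm).2.trans hk1'.symm)
      obtain ⟨y, hyB⟩ := card_eq_one.1 ((hB B hBm).2.trans hk1'.symm)
      obtain ⟨z, hz⟩ := hcross A hAm B hBm
      rw [hxA, hyB] at hz ⊢
      simp only [mem_inter, mem_singleton] at hz
      have hxy : x = y := by omega
      rw [hxy]
    have hAcard : 𝒜.card ≤ 1 := card_le_one.2 (fun A hAm A' hA'm =>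
      (hsingle A hAm B₀ hB₀).trans (hsingle A' hA'm B₀ hB₀).symm)
    have hBcard : ℬ.card ≤ 1 := card_le_one.2 (fun B hBm B' hB'm =>
      ((hsingle A₀ hA₀ B hBm).symm).trans (hsingle A₀ hA₀ B' hB'm))
    rw [← hk1', Nat.choose_one_right, Nat.choose_one_right]
    omega
  -- dispatch base case n = 2k
  rcases eq_or_lt_of_le hkn with hbase | hstep
  · -- pairing argument
    have hdisj : Disjoint 𝒜 (ℬ.image (fun B => V \ B)) := by
      rw [disjoint_left]
      intro C hC hC'
      obtain ⟨B, hBm, rfl⟩ := mem_image.1 hC'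
      obtain ⟨x, hx⟩ := hcross _ hC B hBm
      rw [mem_inter, mem_sdiff] at hx
      exact hx.1.2 hx.2
    have himcard : (ℬ.image (fun B => V \ B)).card = ℬ.card := by
      apply card_image_of_injOn
      intro B hBm B' hB'm hBB'
      have h1 : V \ (V \ B) = B := Finset.sdiff_sdiff_eq_self (hB B hBm).1
      have h2 : V \ (V \ B') = B' := Finset.sdiff_sdiff_eq_self (hB B' hB'm).1
      rw [← h1, show V \ B = V \ B' from hBB', h2]
    have hsub : 𝒜 ∪ ℬ.image (fun B => V \ B) ⊆ powersetCard k V := by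
      intro C hC
      rcases mem_union.1 hC with h | h
      · exact mem_powersetCard.2 ⟨(hA C h).1, (hA C h).2⟩
      · obtain ⟨B, hBm, rfl⟩ := mem_image.1 h
        refine mem_powersetCard.2 ⟨sdiff_subset, ?_⟩
        rw [card_sdiff_of_subset (hB B hBm).1, hV, (hB B hBm).2]
        omega
    have := card_le_card hsub
    rw [card_union_of_disjoint hdisj, himcard, card_powersetCard, hV] at this
    have hnk : n - k = k := by omega
    rw [hnk, Nat.choose_self]
    omega
  -- main case: 2k < n, 2 ≤ k. Inner induction on the measure.
  obtain ⟨l, rfl⟩ : ∃ l, k = l + 2 := ⟨k - 2, by omega⟩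
  obtain ⟨q, rfl⟩ : ∃ q, n = q + 1 := ⟨n - 1, by omega⟩
  have hq : 2 * l + 4 ≤ q := by omega
  clear hkn hk1 hk2 hstep
  have key : ∀ (M : ℕ) (𝒜 ℬ : Finset (Finset ℕ)),
      meas 𝒜 + meas ℬ ≤ M →
      (∀ A ∈ 𝒜, A ⊆ V ∧ A.card = l + 2) → (∀ B ∈ ℬ, B ⊆ V ∧ B.card = l + 2) →
      (∀ A ∈ 𝒜, ∀ B ∈ ℬ, (A ∩ B).Nonempty) → 𝒜.Nonempty → ℬ.Nonempty →
      𝒜.card + ℬ.card + (q + 1 - (l + 2)).choose (l + 2) ≤ (q + 1).choose (l + 2) + 1 := by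
    intro M
    induction M with
    | zero =>
      intro 𝒜 ℬ hM hA hB hcross hAne hBne
      refine crossFT_stable q l V 𝒜 ℬ (IHn q (by omega)) hV hq hA hB hcross hAne hBne ?_ ?_
      · intro i hi j hij A hAm
        by_contra hmv
        obtain ⟨hjA, hiA⟩ : j ∈ A ∧ i ∉ A := by
          by_contra hc
          rw [cmp, if_neg hc] at hmv
          exact hmv hAm
        have h1 : j ≤ w A := Finset.single_le_sum (f := fun x => x) (fun x _ => Nat.zero_le x) hjA
        have h2 : w A ≤ meas 𝒜 := Finset.single_le_sum (f := w) (fun X _ => Nat.zero_le _) hAm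
        omega
      · intro i hi j hij B hBm
        by_contra hmv
        obtain ⟨hjB, hiB⟩ : j ∈ B ∧ i ∉ B := by
          by_contra hc
          rw [cmp, if_neg hc] at hmv
          exact hmv hBm
        have h1 : j ≤ w B := Finset.single_le_sum (f := fun x => x) (fun x _ => Nat.zero_le x) hjB
        have h2 : w B ≤ meas ℬ := Finset.single_le_sum (f := w) (fun X _ => Nat.zero_le _) hBm
        omega
    | succ M ihM =>
      intro 𝒜 ℬ hM hA hB hcross hAne hBne
      by_cases hstab : (∀ i ∈ V, ∀ j, i < j → ∀ A ∈ 𝒜, cmp i j A ∈ 𝒜)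
          ∧ (∀ i ∈ V, ∀ j, i < j → ∀ B ∈ ℬ, cmp i j B ∈ ℬ)
      · exact crossFT_stable q l V 𝒜 ℬ (IHn q (by omega)) hV hq hA hB hcross hAne hBne
          hstab.1 hstab.2
      · rw [not_and_or] at hstab
        -- extract a witness (i, j) for which shifting strictly decreases the measure
        have hwit : ∃ i ∈ V, ∃ j, i < j ∧
            meas (shift i j 𝒜) + meas (shift i j ℬ) < meas 𝒜 + meas ℬ := by
          rcases hstab with h | h
          · push_neg at h
            obtain ⟨i, hi, j, hij, A, hAm, hmv⟩ := h
            exact ⟨i, hi, j, hij, by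
              have := meas_shift_lt hij hAm hmv
              have := meas_shift_le i j hij ℬ
              omega⟩
          · push_neg at h
            obtain ⟨i, hi, j, hij, B, hBm, hmv⟩ := h
            exact ⟨i, hi, j, hij, by
              have := meas_shift_lt hij hBm hmv
              have := meas_shift_le i j hij 𝒜
              omega⟩
        obtain ⟨i, hi, j, hij, hlt⟩ := hwit
        have := ihM (shift i j 𝒜) (shift i j ℬ) (by omega)
          (shift_unif hi hA) (shift_unif hi hB) (shift_cross hcross)
          (by rw [← card_pos, shift_card]; exact card_pos.2 hAne)
          (by rw [← card_pos, shift_card]; exact card_pos.2 hBne)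
        rwa [shift_card, shift_card] at this
  exact key (meas 𝒜 + meas ℬ) 𝒜 ℬ le_rfl hA hB hcross hAne hBne


end FPBound

open Finset FPBound

/-- If `F ⊆ ([n] choose k)` is intersecting with `τ(F) ≥ 3`, `|F ∩ U| ≥ 2` for all
`F ∈ F`, and `n ≥ 2k + |U| - 4`, then for disjoint 2-subsets `P, P' ⊆ U`,
`f_P + f_{P'} ≤ C(n-|U|, k-2) - C(n-k-|U|+2, k-2) + 1`. -/
theorem fP_plus_fP'_upper_bound
    (n k : ℕ) (F : Finset (Finset ℕ))
    (hFsub : ∀ A ∈ F, A ⊆ Finset.Icc 1 n ∧ A.card = k)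
    (hint : ∀ A ∈ F, ∀ A' ∈ F, (A ∩ A').Nonempty)
    (hτ : ∀ S ⊆ Finset.Icc 1 n, S.card ≤ 2 → ∃ A ∈ F, S ∩ A = ∅)
    (U : Finset ℕ) (hU : U ⊆ Finset.Icc 1 n)
    (hU2 : ∀ A ∈ F, 2 ≤ (A ∩ U).card)
    (hn : 2 * k + U.card ≤ n + 4)
    (P P' : Finset ℕ) (hP : P ⊆ U) (hP' : P' ⊆ U)
    (hPcard : P.card = 2) (hP'card : P'.card = 2) (hdisj : P ∩ P' = ∅) :
    (F.filter (fun A => A ∩ U = P)).card + (F.filter (fun A => A ∩ U = P')).card ≤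
      (n - U.card).choose (k - 2) - (n + 2 - k - U.card).choose (k - 2) + 1 := by
  -- trivial case k ≤ 1 : the family is empty
  rcases lt_or_ge k 2 with hk2 | hk2
  · have hFe : F = ∅ := by
      rw [eq_empty_iff_forall_notMem]
      intro A hAm
      have h1 := hU2 A hAm
      have h2 : (A ∩ U).card ≤ A.card := card_le_card inter_subset_left
      have h3 := (hFsub A hAm).2
      omega
    rw [hFe, filter_empty, filter_empty, card_empty]
    exact Nat.zero_le _
  -- main case
  have hUn : U.card ≤ n := by
    have := card_le_card hU
    rwa [Nat.card_Icc, Nat.add_sub_cancel] at this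
  set X := Finset.Icc 1 n \ U with hXdef
  have hXcard : X.card = n - U.card := by
    rw [hXdef, card_sdiff_of_subset hU, Nat.card_Icc, Nat.add_sub_cancel]
  -- generic facts about the reduced families
  have hPsub : ∀ (Q : Finset ℕ), Q ⊆ U → ∀ A ∈ F.filter (fun A => A ∩ U = Q), Q ⊆ A := by
    intro Q hQU A hAm x hx
    rw [mem_filter] at hAm
    have : x ∈ A ∩ U := hAm.2 ▸ hx
    exact mem_of_mem_inter_left this
  have hcard_im : ∀ (Q : Finset ℕ), Q ⊆ U →
      ((F.filter (fun A => A ∩ U = Q)).image (fun A => A \ Q)).card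
        = (F.filter (fun A => A ∩ U = Q)).card := by
    intro Q hQU
    apply card_image_of_injOn
    intro A hAm A' hA'm hAA'
    have h1 : A \ Q ∪ Q = A := sdiff_union_of_subset (hPsub Q hQU A hAm)
    have h2 : A' \ Q ∪ Q = A' := sdiff_union_of_subset (hPsub Q hQU A' hA'm)
    rw [← h1, show A \ Q = A' \ Q from hAA', h2]
  have hunif : ∀ (Q : Finset ℕ), Q ⊆ U → Q.card = 2 →
      ∀ D ∈ (F.filter (fun A => A ∩ U = Q)).image (fun A => A \ Q),
        D ⊆ X ∧ D.card = k - 2 := by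
    intro Q hQU hQc D hD
    obtain ⟨A, hAm, rfl⟩ := mem_image.1 hD
    have hAF : A ∈ F := (mem_filter.1 hAm).1
    have hAU : A ∩ U = Q := (mem_filter.1 hAm).2
    constructor
    · intro x hx
      rw [mem_sdiff] at hx
      refine mem_sdiff.2 ⟨(hFsub A hAF).1 hx.1, fun hxU => ?_⟩
      exact hx.2 (hAU ▸ mem_inter.2 ⟨hx.1, hxU⟩)
    · rw [card_sdiff_of_subset (hPsub Q hQU A hAm), (hFsub A hAF).2, hQc]
  -- the tau covering-number bound, used when one of the families is empty
  have tau_bound : ∀ (Q : Finset ℕ), Q ⊆ U → Q.card = 2 →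
      (F.filter (fun A => A ∩ U = Q)).card + (X.card - (k - 2)).choose (k - 2)
        ≤ X.card.choose (k - 2) := by
    intro Q hQU hQc
    obtain ⟨A₀, hA₀F, hA₀Q⟩ := hτ Q (hQU.trans hU) (by omega)
    set T := A₀ \ U with hTdef
    have hTX : T ⊆ X := by
      intro x hx
      rw [hTdef, mem_sdiff] at hx
      exact mem_sdiff.2 ⟨(hFsub A₀ hA₀F).1 hx.1, hx.2⟩
    have hTc : T.card + (A₀ ∩ U).card = A₀.card := card_sdiff_add_card_inter A₀ U
    have hTk : T.card ≤ k - 2 := by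
      have := hU2 A₀ hA₀F
      have := (hFsub A₀ hA₀F).2
      omega
    have hmeets : ∀ D ∈ (F.filter (fun A => A ∩ U = Q)).image (fun A => A \ Q),
        (D ∩ T).Nonempty := by
      intro D hD
      obtain ⟨A, hAm, rfl⟩ := mem_image.1 hD
      have hAF : A ∈ F := (mem_filter.1 hAm).1
      have hAU : A ∩ U = Q := (mem_filter.1 hAm).2
      obtain ⟨x, hx⟩ := hint A hAF A₀ hA₀F
      rw [mem_inter] at hx
      have hxU : x ∉ U := by
        intro hxU
        have hxQ : x ∈ Q := hAU ▸ mem_inter.2 ⟨hx.1, hxU⟩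
        have : x ∈ Q ∩ A₀ := mem_inter.2 ⟨hxQ, hx.2⟩
        rw [hA₀Q] at this
        exact absurd this (notMem_empty x)
      refine ⟨x, mem_inter.2 ⟨mem_sdiff.2 ⟨hx.1, fun hxQ => hxU (hQU hxQ)⟩,
        mem_sdiff.2 ⟨hx.2, hxU⟩⟩⟩
    have := card_meets hTX (k - 2) (hunif Q hQU hQc) hmeets
    have hmono : (X.card - (k - 2)).choose (k - 2) ≤ (X.card - T.card).choose (k - 2) :=
      Nat.choose_le_choose _ (by omega)
    rw [hcard_im Q hQU] at this
    omega
  -- the central estimate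
  have CE : (F.filter (fun A => A ∩ U = P)).card + (F.filter (fun A => A ∩ U = P')).card
      + (X.card - (k - 2)).choose (k - 2) ≤ X.card.choose (k - 2) + 1 := by
    set 𝒜 := (F.filter (fun A => A ∩ U = P)).image (fun A => A \ P) with h𝒜def
    set ℬ := (F.filter (fun A => A ∩ U = P')).image (fun A => A \ P') with hℬdef
    rcases 𝒜.eq_empty_or_nonempty with h𝒜e | h𝒜ne
    · have hPz : (F.filter (fun A => A ∩ U = P)).card = 0 := by
        rw [← hcard_im P hP, ← h𝒜def, h𝒜e, card_empty]
      have := tau_bound P' hP' hP'card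
      omega
    rcases ℬ.eq_empty_or_nonempty with hℬe | hℬne
    · have hP'z : (F.filter (fun A => A ∩ U = P')).card = 0 := by
        rw [← hcard_im P' hP', ← hℬdef, hℬe, card_empty]
      have := tau_bound P hP hPcard
      omega
    -- both nonempty: cross-intersecting theorem
    have hcross : ∀ D ∈ 𝒜, ∀ E ∈ ℬ, (D ∩ E).Nonempty := by
      intro D hD E hE
      obtain ⟨A, hAm, rfl⟩ := mem_image.1 (h𝒜def ▸ hD)
      obtain ⟨B, hBm, rfl⟩ := mem_image.1 (hℬdef ▸ hE)
      have hAF : A ∈ F := (mem_filter.1 hAm).1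
      have hAU : A ∩ U = P := (mem_filter.1 hAm).2
      have hBF : B ∈ F := (mem_filter.1 hBm).1
      have hBU : B ∩ U = P' := (mem_filter.1 hBm).2
      obtain ⟨x, hx⟩ := hint A hAF B hBF
      rw [mem_inter] at hx
      have hxU : x ∉ U := by
        intro hxU
        have hxP : x ∈ P := hAU ▸ mem_inter.2 ⟨hx.1, hxU⟩
        have hxP' : x ∈ P' := hBU ▸ mem_inter.2 ⟨hx.2, hxU⟩
        have : x ∈ P ∩ P' := mem_inter.2 ⟨hxP, hxP'⟩
        rw [hdisj] at this
        exact absurd this (notMem_empty x)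
      exact ⟨x, mem_inter.2 ⟨mem_sdiff.2 ⟨hx.1, fun h => hxU (hP h)⟩,
        mem_sdiff.2 ⟨hx.2, fun h => hxU (hP' h)⟩⟩⟩
    have := crossFT X.card (k - 2) X 𝒜 ℬ rfl (by omega)
      (hunif P hP hPcard) (hunif P' hP' hP'card) hcross h𝒜ne hℬne
    rw [hcard_im P hP, hcard_im P' hP'] at this
    exact this
  have e2 : n + 2 - k - U.card = X.card - (k - 2) := by omega
  have e1 : n - U.card = X.card := hXcard.symm
  rw [e1, e2]
  have hmono : (X.card - (k - 2)).choose (k - 2) ≤ X.card.choose (k - 2) :=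
    Nat.choose_le_choose _ (Nat.sub_le _ _)
  omega
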